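/- If the real part of the characteristic exponent ψ of a Lévy process satisfies: for all u ≥ v > 0, Re ψ(u) ≤ Re ψ(v) + C for some constant C ≥ 0, then for all real u, v one has Re ψ((u+v)/2) + Re ψ((u-v)/2) ≤ (Re ψ(u) + Re ψ(v))/8 + C/4. -/
import Mathlib


open MeasureTheory

/-- Near-monotonicity of `Re ψ` implies the mid-point bound
`Re ψ((u+v)/2) + Re ψ((u-v)/2) ≤ (Re ψ(u) + Re ψ(v))/8 + C/4`. -/
theorem stmt1 (a : ℝ) (ν : Measure ℝ) (hν0 : ν {0} = 0)
    (hνint : Integrable (fun x => min (x ^ 2) 1) ν)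
    (hcos : ∀ u : ℝ, Integrable (fun x => Real.cos (u * x) - 1) ν)
    (ψRe : ℝ → ℝ)
    (hψ : ∀ u : ℝ, ψRe u = -a ^ 2 * u ^ 2 / 2 + ∫ x, (Real.cos (u * x) - 1) ∂ν)
    (C : ℝ) (hC : 0 ≤ C)
    (hmono : ∀ u v : ℝ, 0 < v → v ≤ u → ψRe u ≤ ψRe v + C) :
    ∀ u v : ℝ, ψRe ((u + v) / 2) + ψRe ((u - v) / 2) ≤ (ψRe u + ψRe v) / 8 + C / 4 := by
  have heven : ∀ u : ℝ, ψRe (-u) = ψRe u := by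
    intro u
    rw [hψ, hψ]
    congr 1
    · ring
    · apply integral_congr_ae
      filter_upwards with x
      rw [neg_mul, Real.cos_neg]
  have habs : ∀ x : ℝ, ψRe |x| = ψRe x := by
    intro x
    rcases abs_cases x with ⟨h, _⟩ | ⟨h, _⟩
    · rw [h]
    · rw [h, heven]
  have hnonpos : ∀ u : ℝ, ψRe u ≤ 0 := by
    intro u
    rw [hψ]
    have h1 : (∫ x, (Real.cos (u * x) - 1) ∂ν) ≤ 0 := by
      apply integral_nonpos
      intro x
      simp [Real.cos_le_one]
    nlinarith [sq_nonneg (a * u)]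
  have hzero : ψRe 0 = 0 := by rw [hψ]; simp
  have hdouble : ∀ u : ℝ, 4 * ψRe u ≤ ψRe (2 * u) := by
    intro u
    rw [hψ, hψ]
    have h1 : 4 * ∫ x, (Real.cos (u * x) - 1) ∂ν ≤ ∫ x, (Real.cos (2 * u * x) - 1) ∂ν := by
      rw [← integral_const_mul]
      apply integral_mono ((hcos u).const_mul 4) (hcos (2 * u))
      intro x
      have h2 : Real.cos (2 * u * x) = 2 * Real.cos (u * x) ^ 2 - 1 := by
        rw [mul_assoc, Real.cos_two_mul]
      simp only [h2]
      nlinarith [sq_nonneg (Real.cos (u * x) - 1)]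
    have h3 : -a ^ 2 * (2 * u) ^ 2 / 2 = 4 * (-a ^ 2 * u ^ 2 / 2) := by ring
    linarith
  have key : ∀ w u : ℝ, |u| ≤ 2 * |w| → ψRe w ≤ (ψRe u + C) / 4 := by
    intro w u h
    have h4 : 4 * ψRe |w| ≤ ψRe (2 * |w|) := hdouble |w|
    rcases eq_or_lt_of_le (abs_nonneg u) with h0 | h0
    · have hu0 : u = 0 := abs_eq_zero.mp h0.symm
      have := hnonpos w
      rw [hu0, hzero]
      linarith
    · have h5 : ψRe (2 * |w|) ≤ ψRe |u| + C := hmono (2 * |w|) |u| h0 h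
      have h6 := habs w
      have h7 := habs u
      linarith
  intro u v
  have e1 : (u + v) / 2 + (u - v) / 2 = u := by ring
  have e2 : (u + v) / 2 - (u - v) / 2 = v := by ring
  have hus : |u| ≤ |(u + v) / 2| + |(u - v) / 2| := by
    calc |u| = |(u + v) / 2 + (u - v) / 2| := by rw [e1]
    _ ≤ _ := abs_add_le _ _
  have hvs : |v| ≤ |(u + v) / 2| + |(u - v) / 2| := by
    calc |v| = |(u + v) / 2 - (u - v) / 2| := by rw [e2]
    _ ≤ _ := abs_sub _ _
  rcases le_total |(u + v) / 2| |(u - v) / 2| with hsd | hsd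
  · have h1 := key ((u - v) / 2) u (by linarith)
    have h2 := key ((u - v) / 2) v (by linarith)
    have h3 := hnonpos ((u + v) / 2)
    linarith
  · have h1 := key ((u + v) / 2) u (by linarith)
    have h2 := key ((u + v) / 2) v (by linarith)
    have h3 := hnonpos ((u - v) / 2)
    linarith
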